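/- arXiv:1903.01620 — 6 statements merged into one kernel-verified Lean document; each statement's English description precedes it below -/
import Mathlib

section
/- Let P and Q be two naive Bayes distributions over a binary class and n binary features with all parameters in (0,1). If P(c | x) = Q(c | x) for all 2ⁿ joint assignments x, then the logistic regression weight vectors obtained from P and Q via the naive-Bayes-to-logistic-regression translation are equal. -/
open Finset

/-- If two naive Bayes distributions (with all parameters in
`(0,1)`) induce the same posterior `P(c|x) = Q(c|x)` on all `2ⁿ` joint
assignments, then their logistic-regression weight vectors obtained from the
standard naive-Bayes-to-LR translation coincide. -/
theorem conforming_naiveBayes_same_weights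
    (n : ℕ) (p q : ℝ) (θc θcb ηc ηcb : Fin n → ℝ)
    (hp : p ∈ Set.Ioo (0 : ℝ) 1) (hq : q ∈ Set.Ioo (0 : ℝ) 1)
    (hθc : ∀ i, θc i ∈ Set.Ioo (0 : ℝ) 1) (hθcb : ∀ i, θcb i ∈ Set.Ioo (0 : ℝ) 1)
    (hηc : ∀ i, ηc i ∈ Set.Ioo (0 : ℝ) 1) (hηcb : ∀ i, ηcb i ∈ Set.Ioo (0 : ℝ) 1)
    (hagree : ∀ x : Fin n → Bool,
      (p * ∏ i, (if x i then θc i else 1 - θc i)) /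
        (p * ∏ i, (if x i then θc i else 1 - θc i)
          + (1 - p) * ∏ i, (if x i then θcb i else 1 - θcb i))
      = (q * ∏ i, (if x i then ηc i else 1 - ηc i)) /
        (q * ∏ i, (if x i then ηc i else 1 - ηc i)
          + (1 - q) * ∏ i, (if x i then ηcb i else 1 - ηcb i))) :
    (Real.log (p / (1 - p)) + ∑ i, Real.log ((1 - θc i) / (1 - θcb i))
      = Real.log (q / (1 - q)) + ∑ i, Real.log ((1 - ηc i) / (1 - ηcb i))) ∧
    (∀ i, Real.log ((θc i / θcb i) * ((1 - θcb i) / (1 - θc i)))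
      = Real.log ((ηc i / ηcb i) * ((1 - ηcb i) / (1 - ηc i)))) := by
  obtain ⟨hp0, hp1⟩ := hp
  obtain ⟨hq0, hq1⟩ := hq
  have hposθc : ∀ (x : Fin n → Bool) i, (0:ℝ) < (if x i then θc i else 1 - θc i) := by
    intro x i; split
    · exact (hθc i).1
    · linarith [(hθc i).2]
  have hposθcb : ∀ (x : Fin n → Bool) i, (0:ℝ) < (if x i then θcb i else 1 - θcb i) := by
    intro x i; split
    · exact (hθcb i).1
    · linarith [(hθcb i).2]
  have hposηc : ∀ (x : Fin n → Bool) i, (0:ℝ) < (if x i then ηc i else 1 - ηc i) := by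
    intro x i; split
    · exact (hηc i).1
    · linarith [(hηc i).2]
  have hposηcb : ∀ (x : Fin n → Bool) i, (0:ℝ) < (if x i then ηcb i else 1 - ηcb i) := by
    intro x i; split
    · exact (hηcb i).1
    · linarith [(hηcb i).2]
  have key : ∀ x : Fin n → Bool,
      Real.log p - Real.log (1 - p)
        + ∑ i, (Real.log (if x i then θc i else 1 - θc i)
                - Real.log (if x i then θcb i else 1 - θcb i))
      = Real.log q - Real.log (1 - q)
        + ∑ i, (Real.log (if x i then ηc i else 1 - ηc i)
                - Real.log (if x i then ηcb i else 1 - ηcb i)) := by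
    intro x
    have hPA : (0:ℝ) < p * ∏ i, (if x i then θc i else 1 - θc i) :=
      mul_pos hp0 (Finset.prod_pos (fun i _ => hposθc x i))
    have hPB : (0:ℝ) < (1 - p) * ∏ i, (if x i then θcb i else 1 - θcb i) :=
      mul_pos (by linarith) (Finset.prod_pos (fun i _ => hposθcb x i))
    have hQA : (0:ℝ) < q * ∏ i, (if x i then ηc i else 1 - ηc i) :=
      mul_pos hq0 (Finset.prod_pos (fun i _ => hposηc x i))
    have hQB : (0:ℝ) < (1 - q) * ∏ i, (if x i then ηcb i else 1 - ηcb i) :=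
      mul_pos (by linarith) (Finset.prod_pos (fun i _ => hposηcb x i))
    have h := hagree x
    set A := p * ∏ i, (if x i then θc i else 1 - θc i) with hAdef
    set B := (1 - p) * ∏ i, (if x i then θcb i else 1 - θcb i) with hBdef
    set C := q * ∏ i, (if x i then ηc i else 1 - ηc i) with hCdef
    set D := (1 - q) * ∏ i, (if x i then ηcb i else 1 - ηcb i) with hDdef
    have hcross : A * D = C * B := by
      have h' : A * (C + D) = C * (A + B) := by
        have := (div_eq_div_iff (by positivity : (A + B) ≠ 0) (by positivity : (C + D) ≠ 0)).mp h
        linarith [this]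
      nlinarith [h']
    have hratio : A / B = C / D :=
      (div_eq_div_iff (ne_of_gt hPB) (ne_of_gt hQB)).mpr hcross
    have hlog : Real.log A - Real.log B = Real.log C - Real.log D := by
      rw [← Real.log_div (ne_of_gt hPA) (ne_of_gt hPB),
          ← Real.log_div (ne_of_gt hQA) (ne_of_gt hQB), hratio]
    have hlAe : Real.log A = Real.log p + ∑ i, Real.log (if x i then θc i else 1 - θc i) := by
      rw [hAdef, Real.log_mul (ne_of_gt hp0)
        (ne_of_gt (Finset.prod_pos (fun i _ => hposθc x i))),
        Real.log_prod (fun i _ => ne_of_gt (hposθc x i))]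
    have hlBe : Real.log B = Real.log (1 - p) + ∑ i, Real.log (if x i then θcb i else 1 - θcb i) := by
      rw [hBdef, Real.log_mul (by linarith)
        (ne_of_gt (Finset.prod_pos (fun i _ => hposθcb x i))),
        Real.log_prod (fun i _ => ne_of_gt (hposθcb x i))]
    have hlCe : Real.log C = Real.log q + ∑ i, Real.log (if x i then ηc i else 1 - ηc i) := by
      rw [hCdef, Real.log_mul (ne_of_gt hq0)
        (ne_of_gt (Finset.prod_pos (fun i _ => hposηc x i))),
        Real.log_prod (fun i _ => ne_of_gt (hposηc x i))]
    have hlDe : Real.log D = Real.log (1 - q) + ∑ i, Real.log (if x i then ηcb i else 1 - ηcb i) := by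
      rw [hDdef, Real.log_mul (by linarith)
        (ne_of_gt (Finset.prod_pos (fun i _ => hposηcb x i))),
        Real.log_prod (fun i _ => ne_of_gt (hposηcb x i))]
    rw [Finset.sum_sub_distrib, Finset.sum_sub_distrib]
    rw [hlAe, hlBe, hlCe, hlDe] at hlog
    linarith [hlog]
  have key0 := key (fun _ => false)
  simp only [Bool.false_eq_true, if_false] at key0
  constructor
  · have h1 : ∑ i, Real.log ((1 - θc i) / (1 - θcb i))
        = ∑ i, (Real.log (1 - θc i) - Real.log (1 - θcb i)) :=
      Finset.sum_congr rfl fun i _ =>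
        Real.log_div (by linarith [(hθc i).2]) (by linarith [(hθcb i).2])
    have h2 : ∑ i, Real.log ((1 - ηc i) / (1 - ηcb i))
        = ∑ i, (Real.log (1 - ηc i) - Real.log (1 - ηcb i)) :=
      Finset.sum_congr rfl fun i _ =>
        Real.log_div (by linarith [(hηc i).2]) (by linarith [(hηcb i).2])
    rw [h1, h2, Real.log_div (ne_of_gt hp0) (by linarith),
        Real.log_div (ne_of_gt hq0) (by linarith)]
    rw [Finset.sum_sub_distrib, Finset.sum_sub_distrib] at key0 ⊢
    linarith [key0]
  · intro i
    have keyi := key (fun j => decide (j = i))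
    have hsumθ : (∑ j, (Real.log (if decide (j = i) = true then θc j else 1 - θc j)
                    - Real.log (if decide (j = i) = true then θcb j else 1 - θcb j)))
        - (∑ j, (Real.log (1 - θc j) - Real.log (1 - θcb j)))
        = (Real.log (θc i) - Real.log (θcb i))
          - (Real.log (1 - θc i) - Real.log (1 - θcb i)) := by
      rw [← Finset.sum_sub_distrib]
      rw [Finset.sum_eq_single i]
      · simp
      · intro j _ hj
        simp [hj]
      · intro h; exact absurd (Finset.mem_univ i) h
    have hsumη : (∑ j, (Real.log (if decide (j = i) = true then ηc j else 1 - ηc j)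
                    - Real.log (if decide (j = i) = true then ηcb j else 1 - ηcb j)))
        - (∑ j, (Real.log (1 - ηc j) - Real.log (1 - ηcb j)))
        = (Real.log (ηc i) - Real.log (ηcb i))
          - (Real.log (1 - ηc i) - Real.log (1 - ηcb i)) := by
      rw [← Finset.sum_sub_distrib]
      rw [Finset.sum_eq_single i]
      · simp
      · intro j _ hj
        simp [hj]
      · intro h; exact absurd (Finset.mem_univ i) h
    have e1 : Real.log ((θc i / θcb i) * ((1 - θcb i) / (1 - θc i)))
        = (Real.log (θc i) - Real.log (θcb i))
          - (Real.log (1 - θc i) - Real.log (1 - θcb i)) := by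
      rw [Real.log_mul (ne_of_gt (div_pos (hθc i).1 (hθcb i).1))
          (ne_of_gt (div_pos (by linarith [(hθcb i).2]) (by linarith [(hθc i).2]))),
          Real.log_div (ne_of_gt (hθc i).1) (ne_of_gt (hθcb i).1),
          Real.log_div (by linarith [(hθcb i).2] : (1:ℝ) - θcb i ≠ 0)
            (by linarith [(hθc i).2] : (1:ℝ) - θc i ≠ 0)]
      ring
    have e2 : Real.log ((ηc i / ηcb i) * ((1 - ηcb i) / (1 - ηc i)))
        = (Real.log (ηc i) - Real.log (ηcb i))
          - (Real.log (1 - ηc i) - Real.log (1 - ηcb i)) := by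
      rw [Real.log_mul (ne_of_gt (div_pos (hηc i).1 (hηcb i).1))
          (ne_of_gt (div_pos (by linarith [(hηcb i).2]) (by linarith [(hηc i).2]))),
          Real.log_div (ne_of_gt (hηc i).1) (ne_of_gt (hηcb i).1),
          Real.log_div (by linarith [(hηcb i).2] : (1:ℝ) - ηcb i ≠ 0)
            (by linarith [(hηc i).2] : (1:ℝ) - ηc i ≠ 0)]
      ring
    rw [e1, e2, ← hsumθ, ← hsumη]
    linarith [keyi, key0]
end

section
/- Given a logistic regression model with weights (w₀, …, wₙ) ∈ ℝ^{n+1} over n binary features, and any vector θ ∈ (0,1)ⁿ, there exists a unique naive Bayes distribution P (with all parameters in (0,1)) such that P(c | x) = σ(w₀ + Σᵢ wᵢ xᵢ) for all x ∈ {0,1}ⁿ and P(xᵢ = 1 | c) = θᵢ for all i. Its remaining parameters are P(xᵢ = 1 | c̄) = 1/(1 + e^{wᵢ}(1-θᵢ)/θᵢ) and P(c) = σ(w₀ - Σᵢ log(P(x̄ᵢ|c)/P(x̄ᵢ|c̄))). -/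
open Finset

noncomputable def sigmoid (t : ℝ) : ℝ := 1 / (1 + Real.exp (-t))

lemma sigmoid_mem (t : ℝ) : sigmoid t ∈ Set.Ioo (0:ℝ) 1 := by
  unfold sigmoid
  have h : 0 < 1 + Real.exp (-t) := by positivity
  constructor
  · positivity
  · rw [div_lt_one h]; linarith [Real.exp_pos (-t)]

lemma logit_sigmoid (t : ℝ) :
    Real.log (sigmoid t) - Real.log (1 - sigmoid t) = t := by
  have h : 0 < 1 + Real.exp (-t) := by positivity
  have h2 : 1 - sigmoid t = Real.exp (-t) / (1 + Real.exp (-t)) := by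
    unfold sigmoid; field_simp; ring
  rw [h2]
  unfold sigmoid
  rw [Real.log_div one_ne_zero (ne_of_gt h),
      Real.log_div (Real.exp_ne_zero _) (ne_of_gt h), Real.log_exp, Real.log_one]
  ring

lemma sigmoid_injective : Function.Injective sigmoid := by
  intro s t h
  have := logit_sigmoid s
  rw [h, logit_sigmoid] at this
  exact this.symm

lemma sigmoid_logit {p : ℝ} (hp : p ∈ Set.Ioo (0:ℝ) 1) :
    sigmoid (Real.log p - Real.log (1 - p)) = p := by
  obtain ⟨h0, h1⟩ := hp
  have h1' : (0:ℝ) < 1 - p := by linarith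
  unfold sigmoid
  rw [neg_sub, Real.exp_sub, Real.exp_log h1', Real.exp_log h0]
  field_simp
  ring

lemma div_eq_sigmoid (A B : ℝ) (hA : 0 < A) (hB : 0 < B) :
    A / (A + B) = sigmoid (Real.log A - Real.log B) := by
  unfold sigmoid
  rw [neg_sub, Real.exp_sub, Real.exp_log hB, Real.exp_log hA]
  rw [div_eq_div_iff (by positivity) (by positivity)]
  field_simp

lemma eta_mem {wi θi : ℝ} (h0 : 0 < θi) (h1 : θi < 1) :
    1 / (1 + Real.exp wi * (1 - θi) / θi) ∈ Set.Ioo (0:ℝ) 1 := by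
  have h1' : (0:ℝ) < 1 - θi := by linarith
  have hE : 0 < Real.exp wi * (1 - θi) / θi := by
    have := Real.exp_pos wi; positivity
  constructor
  · positivity
  · rw [div_lt_one (by linarith)]; linarith

lemma eta_key {wi θi : ℝ} (h0 : 0 < θi) (h1 : θi < 1) :
    Real.log θi - Real.log (1 / (1 + Real.exp wi * (1 - θi) / θi)) -
      (Real.log (1 - θi) - Real.log (1 - 1 / (1 + Real.exp wi * (1 - θi) / θi))) = wi := by
  have h1' : (0:ℝ) < 1 - θi := by linarith
  have hEp := Real.exp_pos wi
  set ηi := 1 / (1 + Real.exp wi * (1 - θi) / θi) with hη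
  obtain ⟨hη0, hη1⟩ := eta_mem (wi := wi) h0 h1
  have hη1' : (0:ℝ) < 1 - ηi := by rw [hη]; linarith
  have hη0' : (0:ℝ) < ηi := by rw [hη]; linarith
  have hD : (0:ℝ) < θi + Real.exp wi * (1 - θi) := by positivity
  have hηval : ηi = θi / (θi + Real.exp wi * (1 - θi)) := by
    rw [hη, eq_div_iff hD.ne']
    field_simp
  have heq : θi * (1 - ηi) = Real.exp wi * ((1 - θi) * ηi) := by
    rw [hηval]
    field_simp
    ring
  have hlog := congrArg Real.log heq
  rw [Real.log_mul (ne_of_gt h0) hη1'.ne', Real.log_mul (Real.exp_ne_zero _)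
      (by positivity), Real.log_mul h1'.ne' hη0'.ne', Real.log_exp] at hlog
  linarith

lemma eta_unique {wi θi ηi : ℝ} (hθ0 : 0 < θi) (hθ1 : θi < 1) (hη0 : 0 < ηi) (hη1 : ηi < 1)
    (h : Real.log θi - Real.log ηi - (Real.log (1 - θi) - Real.log (1 - ηi)) = wi) :
    ηi = 1 / (1 + Real.exp wi * (1 - θi) / θi) := by
  have h1' : (0:ℝ) < 1 - θi := by linarith
  have hη1' : (0:ℝ) < 1 - ηi := by linarith
  have hE := Real.exp_pos wi
  have h2 : Real.log θi + Real.log (1 - ηi) = wi + (Real.log ηi + Real.log (1 - θi)) := by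
    linarith
  have h3 := congrArg Real.exp h2
  rw [Real.exp_add, Real.exp_add, Real.exp_add, Real.exp_log hθ0, Real.exp_log hη1',
      Real.exp_log hη0, Real.exp_log h1'] at h3
  have hD : (0:ℝ) < 1 + Real.exp wi * (1 - θi) / θi := by positivity
  rw [eq_div_iff hD.ne']
  field_simp
  nlinarith [h3]

lemma conform_iff {n : ℕ} {w₀ : ℝ} {w θ : Fin n → ℝ}
    (hθ : ∀ i, θ i ∈ Set.Ioo (0:ℝ) 1)
    {p : ℝ} (hp : p ∈ Set.Ioo (0:ℝ) 1) {η : Fin n → ℝ}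
    (hη : ∀ i, η i ∈ Set.Ioo (0:ℝ) 1) (x : Fin n → Bool) :
    ((p * ∏ i, (if x i then θ i else 1 - θ i)) /
        (p * ∏ i, (if x i then θ i else 1 - θ i)
          + (1 - p) * ∏ i, (if x i then η i else 1 - η i))
      = sigmoid (w₀ + ∑ i, w i * (if x i then (1:ℝ) else 0)))
    ↔ ((Real.log p - Real.log (1 - p)) +
        ∑ i, (Real.log (if x i then θ i else 1 - θ i)
              - Real.log (if x i then η i else 1 - η i))
      = w₀ + ∑ i, w i * (if x i then (1:ℝ) else 0)) := by
  have ha : ∀ i, (0:ℝ) < (if x i then θ i else 1 - θ i) := fun i => by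
    rcases hθ i with ⟨h0, h1⟩; split <;> linarith
  have hb : ∀ i, (0:ℝ) < (if x i then η i else 1 - η i) := fun i => by
    rcases hη i with ⟨h0, h1⟩; split <;> linarith
  have hA : 0 < ∏ i, (if x i then θ i else 1 - θ i) :=
    Finset.prod_pos fun i _ => ha i
  have hB : 0 < ∏ i, (if x i then η i else 1 - η i) :=
    Finset.prod_pos fun i _ => hb i
  have hA' : 0 < p * ∏ i, (if x i then θ i else 1 - θ i) := mul_pos hp.1 hA
  have hB' : 0 < (1 - p) * ∏ i, (if x i then η i else 1 - η i) :=
    mul_pos (by linarith [hp.2]) hB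
  rw [div_eq_sigmoid _ _ hA' hB',
      Real.log_mul hp.1.ne' hA.ne', Real.log_mul (by linarith [hp.2] : (1:ℝ) - p ≠ 0) hB.ne',
      Real.log_prod (fun i _ => (ha i).ne'), Real.log_prod (fun i _ => (hb i).ne')]
  have hre : Real.log p + ∑ i, Real.log (if x i then θ i else 1 - θ i)
      - (Real.log (1 - p) + ∑ i, Real.log (if x i then η i else 1 - η i))
      = (Real.log p - Real.log (1 - p)) +
        ∑ i, (Real.log (if x i then θ i else 1 - θ i)
              - Real.log (if x i then η i else 1 - η i)) := by
    rw [Finset.sum_sub_distrib]; ring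
  rw [hre]
  exact ⟨fun h => sigmoid_injective h, fun h => by rw [h]⟩

lemma exists_part (n : ℕ) (w₀ : ℝ) (w : Fin n → ℝ) (θ : Fin n → ℝ)
    (hθ : ∀ i, θ i ∈ Set.Ioo (0 : ℝ) 1) :
    (let η : Fin n → ℝ := fun i => 1 / (1 + Real.exp (w i) * (1 - θ i) / θ i)
     let prior : ℝ := sigmoid (w₀ - ∑ i, Real.log ((1 - θ i) / (1 - η i)))
     (prior ∈ Set.Ioo (0 : ℝ) 1 ∧ ∀ i, η i ∈ Set.Ioo (0 : ℝ) 1) ∧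
     ∀ x : Fin n → Bool,
       (prior * ∏ i, (if x i then θ i else 1 - θ i)) /
         (prior * ∏ i, (if x i then θ i else 1 - θ i)
           + (1 - prior) * ∏ i, (if x i then η i else 1 - η i))
       = sigmoid (w₀ + ∑ i, w i * (if x i then (1 : ℝ) else 0))) := by
  intro η prior
  have hηmem : ∀ i, η i ∈ Set.Ioo (0:ℝ) 1 := fun i => eta_mem (hθ i).1 (hθ i).2
  have hpmem : prior ∈ Set.Ioo (0:ℝ) 1 := sigmoid_mem _
  refine ⟨⟨hpmem, hηmem⟩, fun x => ?_⟩
  rw [conform_iff hθ hpmem hηmem x]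
  have hlogit : Real.log prior - Real.log (1 - prior)
      = w₀ - ∑ i, Real.log ((1 - θ i) / (1 - η i)) := logit_sigmoid _
  rw [hlogit]
  have hdiv : ∀ i, Real.log ((1 - θ i) / (1 - η i))
      = Real.log (1 - θ i) - Real.log (1 - η i) := fun i => by
    rcases hθ i with ⟨h0, h1⟩
    rcases hηmem i with ⟨g0, g1⟩
    exact Real.log_div (by linarith) (by linarith)
  rw [Finset.sum_congr rfl (fun i _ => hdiv i)]
  have hterm : ∀ i ∈ Finset.univ,
      (Real.log (if x i then θ i else 1 - θ i)
        - Real.log (if x i then η i else 1 - η i))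
      - (Real.log (1 - θ i) - Real.log (1 - η i))
      = w i * (if x i then (1:ℝ) else 0) := by
    intro i _
    rcases Bool.eq_false_or_eq_true (x i) with hxv | hxv <;> rw [hxv]
    · rw [if_pos rfl, if_pos rfl, if_pos rfl, mul_one]
      have := eta_key (wi := w i) (hθ i).1 (hθ i).2
      linarith
    · rw [if_neg (by decide), if_neg (by decide), if_neg (by decide), mul_zero]
      ring
  have hsum := Finset.sum_congr rfl hterm
  rw [Finset.sum_sub_distrib] at hsum
  linarith [hsum]

/-- Given logistic regression weights `(w₀, w) ∈ ℝ^{n+1}` and any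
`θ ∈ (0,1)ⁿ`, there is a unique naive Bayes distribution (all parameters in
`(0,1)`) with `P(xᵢ=1|c) = θᵢ` conforming with the logistic regression, i.e.
`P(c|x) = σ(w₀ + ∑ᵢ wᵢ xᵢ)` for all `x ∈ {0,1}ⁿ`.  Moreover its remaining
parameters are explicitly `P(xᵢ=1|c̄) = 1/(1 + e^{wᵢ}(1-θᵢ)/θᵢ)` and
`P(c) = σ(w₀ - ∑ᵢ log(P(x̄ᵢ|c)/P(x̄ᵢ|c̄)))`. -/
theorem lr_to_naiveBayes_exists_unique
    (n : ℕ) (w₀ : ℝ) (w : Fin n → ℝ) (θ : Fin n → ℝ)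
    (hθ : ∀ i, θ i ∈ Set.Ioo (0 : ℝ) 1) :
    (∃! q : ℝ × (Fin n → ℝ),
      (q.1 ∈ Set.Ioo (0 : ℝ) 1 ∧ ∀ i, q.2 i ∈ Set.Ioo (0 : ℝ) 1) ∧
      ∀ x : Fin n → Bool,
        (q.1 * ∏ i, (if x i then θ i else 1 - θ i)) /
          (q.1 * ∏ i, (if x i then θ i else 1 - θ i)
            + (1 - q.1) * ∏ i, (if x i then q.2 i else 1 - q.2 i))
        = sigmoid (w₀ + ∑ i, w i * (if x i then (1 : ℝ) else 0))) ∧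
    (let η : Fin n → ℝ := fun i => 1 / (1 + Real.exp (w i) * (1 - θ i) / θ i)
     let prior : ℝ := sigmoid (w₀ - ∑ i, Real.log ((1 - θ i) / (1 - η i)))
     (prior ∈ Set.Ioo (0 : ℝ) 1 ∧ ∀ i, η i ∈ Set.Ioo (0 : ℝ) 1) ∧
     ∀ x : Fin n → Bool,
       (prior * ∏ i, (if x i then θ i else 1 - θ i)) /
         (prior * ∏ i, (if x i then θ i else 1 - θ i)
           + (1 - prior) * ∏ i, (if x i then η i else 1 - η i))
       = sigmoid (w₀ + ∑ i, w i * (if x i then (1 : ℝ) else 0))) := by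
  have hex := exists_part n w₀ w θ hθ
  set ηh : Fin n → ℝ := fun i => 1 / (1 + Real.exp (w i) * (1 - θ i) / θ i) with hηh
  set priorh : ℝ := sigmoid (w₀ - ∑ i, Real.log ((1 - θ i) / (1 - ηh i))) with hpriorh
  refine ⟨⟨(priorh, ηh), hex, ?_⟩, hex⟩
  rintro ⟨p, η⟩ ⟨⟨hp, hη⟩, hconf⟩
  have hF : ∀ x : Fin n → Bool,
      (Real.log p - Real.log (1 - p)) +
        ∑ i, (Real.log (if x i then θ i else 1 - θ i)
              - Real.log (if x i then η i else 1 - η i))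
      = w₀ + ∑ i, w i * (if x i then (1:ℝ) else 0) :=
    fun x => (conform_iff hθ hp hη x).mp (hconf x)
  -- base equation (all-false input)
  have hbase := hF (fun _ => false)
  simp only [Bool.false_eq_true, if_false, mul_zero, Finset.sum_const_zero, add_zero] at hbase
  -- η is determined
  have hηeq : ∀ j, η j = ηh j := by
    intro j
    have hj := hF (fun i => decide (i = j))
    simp only [decide_eq_true_eq] at hj
    have hsplit : ∀ f : Fin n → ℝ, ∑ i, f i = f j + ∑ i ∈ Finset.univ.erase j, f i :=
      fun f => (Finset.add_sum_erase _ f (Finset.mem_univ j)).symm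
    rw [hsplit (fun i => Real.log (if i = j then θ i else 1 - θ i)
          - Real.log (if i = j then η i else 1 - η i)),
        hsplit (fun i => w i * (if i = j then (1:ℝ) else 0))] at hj
    rw [hsplit (fun i => Real.log (1 - θ i) - Real.log (1 - η i))] at hbase
    simp only [eq_self_iff_true, ite_true, if_true, mul_one, add_zero] at hj
    have herase1 : ∑ i ∈ Finset.univ.erase j,
        (Real.log (if i = j then θ i else 1 - θ i)
          - Real.log (if i = j then η i else 1 - η i))
        = ∑ i ∈ Finset.univ.erase j, (Real.log (1 - θ i) - Real.log (1 - η i)) := by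
      refine Finset.sum_congr rfl fun i hi => ?_
      rw [if_neg (Finset.mem_erase.mp hi).1, if_neg (Finset.mem_erase.mp hi).1]
    have herase2 : ∑ i ∈ Finset.univ.erase j, w i * (if i = j then (1:ℝ) else 0) = 0 := by
      refine Finset.sum_eq_zero fun i hi => ?_
      rw [if_neg (Finset.mem_erase.mp hi).1, mul_zero]
    rw [herase1, herase2] at hj
    have hkey : Real.log (θ j) - Real.log (η j)
        - (Real.log (1 - θ j) - Real.log (1 - η j)) = w j := by linarith
    exact eta_unique (hθ j).1 (hθ j).2 (hη j).1 (hη j).2 hkey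
  have hηfun : η = ηh := funext hηeq
  -- prior is determined
  have hpe : p = priorh := by
    have hdiv : ∀ i, Real.log ((1 - θ i) / (1 - ηh i))
        = Real.log (1 - θ i) - Real.log (1 - ηh i) := fun i => by
      rcases hθ i with ⟨h0, h1⟩
      rcases eta_mem (wi := w i) h0 h1 with ⟨g0, g1⟩
      exact Real.log_div (by linarith) (by linarith)
    have hlp : Real.log p - Real.log (1 - p)
        = w₀ - ∑ i, Real.log ((1 - θ i) / (1 - ηh i)) := by
      rw [Finset.sum_congr rfl (fun i _ => hdiv i), Finset.sum_sub_distrib]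
      rw [hηfun] at hbase
      rw [Finset.sum_sub_distrib] at hbase
      linarith
    calc p = sigmoid (Real.log p - Real.log (1 - p)) := (sigmoid_logit hp).symm
      _ = priorh := by rw [hlp]
  exact Prod.ext hpe hηfun
end

section
/- If a logistic regression model F with weights w and a naive Bayes distribution P over binary features satisfy P(c | x) = F(x) for all x ∈ {0,1}ⁿ, then for all i ≥ 1: e^{wᵢ} · P(x̄ᵢ|c) · P(xᵢ|c̄) = P(xᵢ|c) · P(x̄ᵢ|c̄), and e^{w₀} · P(c̄) · Πᵢ P(x̄ᵢ|c̄) = P(c) · Πᵢ P(x̄ᵢ|c). -/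
open Finset

/-- If a naive Bayes distribution (prior `p`, conditionals `θc`,
`θcb`, all in `(0,1)`) conforms with the logistic regression with weights
`(w₀, w)`, then the monomial constraints of the NaCL geometric program hold:
`e^{wᵢ}·P(x̄ᵢ|c)·P(xᵢ|c̄) = P(xᵢ|c)·P(x̄ᵢ|c̄)` for each `i`, and
`e^{w₀}·P(c̄)·∏ᵢP(x̄ᵢ|c̄) = P(c)·∏ᵢP(x̄ᵢ|c)`. -/
theorem conformance_implies_monomial_constraints
    (n : ℕ) (w₀ : ℝ) (w : Fin n → ℝ) (p : ℝ) (θc θcb : Fin n → ℝ)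
    (hp : p ∈ Set.Ioo (0 : ℝ) 1)
    (hθc : ∀ i, θc i ∈ Set.Ioo (0 : ℝ) 1)
    (hθcb : ∀ i, θcb i ∈ Set.Ioo (0 : ℝ) 1)
    (hconf : ∀ x : Fin n → Bool,
      (p * ∏ i, (if x i then θc i else 1 - θc i)) /
        (p * ∏ i, (if x i then θc i else 1 - θc i)
          + (1 - p) * ∏ i, (if x i then θcb i else 1 - θcb i))
      = sigmoid (w₀ + ∑ i, w i * (if x i then (1 : ℝ) else 0))) :
    (∀ i, Real.exp (w i) * (1 - θc i) * θcb i = θc i * (1 - θcb i)) ∧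
    Real.exp w₀ * (1 - p) * ∏ i, (1 - θcb i) = p * ∏ i, (1 - θc i) := by
  obtain ⟨hp0, hp1⟩ := hp
  have hA : ∀ x : Fin n → Bool, 0 < p * ∏ i, (if x i then θc i else 1 - θc i) := by
    intro x
    refine mul_pos hp0 (Finset.prod_pos fun i _ => ?_)
    cases x i <;> simp [(hθc i).1, sub_pos.2 (hθc i).2]
  have hB : ∀ x : Fin n → Bool, 0 < (1 - p) * ∏ i, (if x i then θcb i else 1 - θcb i) := by
    intro x
    refine mul_pos (by linarith) (Finset.prod_pos fun i _ => ?_)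
    cases x i <;> simp [(hθcb i).1, sub_pos.2 (hθcb i).2]
  have key : ∀ x : Fin n → Bool,
      p * ∏ i, (if x i then θc i else 1 - θc i)
        = Real.exp (w₀ + ∑ i, w i * (if x i then (1 : ℝ) else 0)) *
            ((1 - p) * ∏ i, (if x i then θcb i else 1 - θcb i)) := by
    intro x
    have h := hconf x
    set A := p * ∏ i, (if x i then θc i else 1 - θc i) with hAdef
    set B := (1 - p) * ∏ i, (if x i then θcb i else 1 - θcb i) with hBdef
    set t := w₀ + ∑ i, w i * (if x i then (1 : ℝ) else 0) with htdef
    have hApos := hA x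
    have hBpos := hB x
    have hE : 0 < Real.exp (-t) := Real.exp_pos _
    unfold sigmoid at h
    rw [div_eq_div_iff (by linarith) (by linarith)] at h
    have h2 : A * Real.exp (-t) = B := by nlinarith [h]
    rw [Real.exp_neg] at h2
    have : A = B * Real.exp t := by
      field_simp at h2
      linarith
    rw [this]; ring
  have hbase := key (fun _ => false)
  simp only [Bool.false_eq_true, if_false, mul_zero, Finset.sum_const_zero, add_zero] at hbase
  constructor
  · intro i
    have hi := key (fun j => decide (j = i))
    simp only [decide_eq_true_eq] at hi
    rw [← Finset.mul_prod_erase Finset.univ _ (Finset.mem_univ i),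
        ← Finset.mul_prod_erase Finset.univ
          (fun j => if j = i then θcb j else 1 - θcb j) (Finset.mem_univ i)] at hi
    simp only [if_pos rfl, if_true] at hi
    rw [Finset.prod_congr rfl (fun j hj => if_neg (Finset.ne_of_mem_erase hj)),
        Finset.prod_congr rfl (fun j hj =>
          if_neg (Finset.ne_of_mem_erase hj) :
          ∀ j ∈ Finset.univ.erase i, (if j = i then θcb j else 1 - θcb j) = 1 - θcb j)] at hi
    have hsum : (∑ j, w j * (if j = i then (1 : ℝ) else 0)) = w i := by
      simp [mul_ite]
    rw [hsum, Real.exp_add] at hi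
    rw [← Finset.mul_prod_erase Finset.univ (fun j => 1 - θc j) (Finset.mem_univ i),
        ← Finset.mul_prod_erase Finset.univ (fun j => 1 - θcb j) (Finset.mem_univ i)] at hbase
    set Qc := ∏ j ∈ Finset.univ.erase i, (1 - θc j) with hQc
    set Qcb := ∏ j ∈ Finset.univ.erase i, (1 - θcb j) with hQcb
    have hQcpos : 0 < Qc := Finset.prod_pos fun j _ => sub_pos.2 (hθc j).2
    have h3 : (Real.exp (w i) * (1 - θc i) * θcb i - θc i * (1 - θcb i)) * (p * Qc) = 0 := by
      linear_combination Real.exp (w i) * θcb i * hbase - (1 - θcb i) * hi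
    have hne : p * Qc ≠ 0 := (mul_pos hp0 hQcpos).ne'
    rcases mul_eq_zero.1 h3 with h4 | h4
    · linarith [sub_eq_zero.1 h4]
    · exact absurd h4 hne
  · linear_combination -hbase
end

section
/- Let P_θ range over a family of joint distributions over features X and class C such that the conditional distribution P_θ(C | x) is the same fixed function for all θ in the family. Let D be a dataset of feature assignments and D′ the completed dataset containing, for each d = x ∈ D and each class value c, the weighted example (x, c) with weight α_c(x) satisfying α_c(x) ≥ 0 and Σ_c α_c(x) = 1. Then the weighted joint log-likelihood on D′ differs from the marginal log-likelihood on D by a constant independent of θ; hence any maximizer of one is a maximizer of the other. -/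
open Finset

/-- Let `P θ` be a family of joint distributions over features `X`
and class `C` whose conditional `P_θ(c|x)` is the same for all members of the
family (on the dataset).  For a dataset `D` of feature assignments completed
into a weighted dataset with weights `α x c ≥ 0`, `∑ c, α x c = 1`, the
weighted joint log-likelihood and the marginal log-likelihood differ by a
constant independent of `θ`; hence they have the same maximizers. -/
theorem conformant_learning_objective_equivalence
    {Θ X C : Type*} [Fintype C]
    (P : Θ → X → C → ℝ) (D : Finset X) (α : X → C → ℝ)
    (hpos : ∀ θ c, ∀ x ∈ D, 0 < P θ x c)
    (hα0 : ∀ x c, 0 ≤ α x c) (hα1 : ∀ x, ∑ c, α x c = 1)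
    (hfixed : ∀ θ θ' : Θ, ∀ x ∈ D, ∀ c : C,
      P θ x c / (∑ c', P θ x c') = P θ' x c / (∑ c', P θ' x c')) :
    (∃ K : ℝ, ∀ θ : Θ,
      (∑ x ∈ D, ∑ c, α x c * Real.log (P θ x c))
        = (∑ x ∈ D, Real.log (∑ c, P θ x c)) + K) ∧
    (∀ θmax : Θ,
      (∀ θ, (∑ x ∈ D, ∑ c, α x c * Real.log (P θ x c))
          ≤ ∑ x ∈ D, ∑ c, α x c * Real.log (P θmax x c))
      ↔ (∀ θ, (∑ x ∈ D, Real.log (∑ c, P θ x c))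
          ≤ ∑ x ∈ D, Real.log (∑ c, P θmax x c))) := by
  have key : ∀ θ : Θ,
      (∑ x ∈ D, ∑ c, α x c * Real.log (P θ x c))
        = (∑ x ∈ D, Real.log (∑ c, P θ x c))
          + ∑ x ∈ D, ∑ c, α x c * Real.log (P θ x c / (∑ c', P θ x c')) := by
    intro θ
    rw [← Finset.sum_add_distrib]
    refine Finset.sum_congr rfl fun x hx => ?_
    have hC : Nonempty C := by
      by_contra h
      haveI := not_nonempty_iff.mp h
      have := hα1 x
      simp at this
    have hsum : 0 < ∑ c, P θ x c :=
      Finset.sum_pos (fun c _ => hpos θ c x hx) Finset.univ_nonempty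
    have hlog : ∀ c : C, Real.log (P θ x c / (∑ c', P θ x c'))
        = Real.log (P θ x c) - Real.log (∑ c', P θ x c') :=
      fun c => Real.log_div (hpos θ c x hx).ne' hsum.ne'
    simp_rw [hlog, mul_sub, Finset.sum_sub_distrib, ← Finset.sum_mul, hα1 x, one_mul]
    ring
  have hconst : ∀ θ θ' : Θ,
      (∑ x ∈ D, ∑ c, α x c * Real.log (P θ x c / (∑ c', P θ x c')))
        = ∑ x ∈ D, ∑ c, α x c * Real.log (P θ' x c / (∑ c', P θ' x c')) := by
    intro θ θ'
    refine Finset.sum_congr rfl fun x hx => Finset.sum_congr rfl fun c _ => ?_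
    rw [hfixed θ θ' x hx c]
  rcases isEmpty_or_nonempty Θ with hΘ | hΘ
  · exact ⟨⟨0, fun θ => (IsEmpty.false θ).elim⟩, fun θmax => (IsEmpty.false θmax).elim⟩
  obtain ⟨θ0⟩ := hΘ
  refine ⟨⟨∑ x ∈ D, ∑ c, α x c * Real.log (P θ0 x c / (∑ c', P θ0 x c')), fun θ => ?_⟩,
    fun θmax => ?_⟩
  · rw [key θ, hconst θ θ0]
  · constructor
    · intro h θ
      have := h θ
      rw [key θ, key θmax, hconst θ θ0, hconst θmax θ0] at this
      linarith
    · intro h θ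
      rw [key θ, key θmax, hconst θ θ0, hconst θmax θ0]
      linarith [h θ]
end

section
/- Let F(x) = σ(w₀ + Σᵢ wᵢ xᵢ) be a binary logistic regression and suppose a naive Bayes distribution P conforms with F. Then for any partial observation y (an assignment to a subset S of features), the expected prediction E_{m∼P(M|y)}[F(y,m)] is computable in closed form as σ(log(P(c)/P(c̄)) + Σ_{i∈S} log(P(yᵢ|c)/P(yᵢ|c̄))), i.e., marginal inference in P computes the expectation of F exactly. -/
open Finset

lemma sigmoid_log_div {a b : ℝ} (ha : 0 < a) (hb : 0 < b) :
    sigmoid (Real.log (a / b)) = a / (a + b) := by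
  unfold sigmoid
  rw [← Real.log_inv, Real.exp_log (by positivity)]
  rw [inv_div]
  rw [show (1:ℝ) + b / a = (a + b)/a by field_simp, one_div_div]

lemma sum_filter_prod_eq {n : ℕ} (S : Finset (Fin n)) (y : Fin n → Bool)
    (g : Fin n → Bool → ℝ) :
    ∑ x ∈ Finset.univ.filter (fun x : Fin n → Bool => ∀ i ∈ S, x i = y i),
        ∏ i, g i (x i)
    = (∏ i ∈ S, g i (y i)) * ∏ i ∈ Sᶜ, (g i false + g i true) := by
  classical
  set h : Fin n → Bool → ℝ :=
    fun i b => if i ∈ S then (if b = y i then g i b else 0) else g i b with hh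
  have step1 : ∑ x ∈ Finset.univ.filter (fun x : Fin n → Bool => ∀ i ∈ S, x i = y i),
      ∏ i, g i (x i) = ∑ x : Fin n → Bool, ∏ i, h i (x i) := by
    rw [Finset.sum_filter]
    refine Finset.sum_congr rfl ?_
    intro x _
    by_cases hx : ∀ i ∈ S, x i = y i
    · rw [if_pos hx]
      refine Finset.prod_congr rfl fun i _ => ?_
      by_cases hi : i ∈ S <;> simp [h, hi, hx i]
    · rw [if_neg hx]
      obtain ⟨i, hiS, hne⟩ := by
        push_neg at hx; exact hx
      refine (Finset.prod_eq_zero (Finset.mem_univ i) ?_).symm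
      simp [h, hiS, hne]
  rw [step1]
  have step2 : ∑ x : Fin n → Bool, ∏ i, h i (x i)
      = ∏ i, (h i false + h i true) := by
    have := Finset.prod_univ_sum (fun _ : Fin n => (Finset.univ : Finset Bool)) h
    rw [Fintype.piFinset_univ] at this
    rw [← this]
    refine Finset.prod_congr rfl fun i _ => ?_
    simp [Fintype.sum_bool, add_comm]
  rw [step2, ← Finset.prod_mul_prod_compl S]
  congr 1
  · refine Finset.prod_congr rfl fun i hi => ?_
    cases hy : y i <;> simp [h, hi, hy]
  · refine Finset.prod_congr rfl fun i hi => ?_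
    simp only [Finset.mem_compl] at hi
    simp [h, hi]

/-- If a naive Bayes distribution `P` conforms with a logistic
regression `F` (i.e. `P(c|x) = F(x)` on all of `{0,1}ⁿ`), then for any partial
observation `y` on an observed set `S`, the expected prediction
`∑_m P(m|y)·F(y,m)` (sum over completions weighted by their conditional
probability) is given in closed form by marginal inference in `P`:
`σ(log(P(c)/P(c̄)) + ∑_{i∈S} log(P(yᵢ|c)/P(yᵢ|c̄)))`. -/
theorem expected_prediction_conformant_closed_form
    (n : ℕ) (w₀ : ℝ) (w : Fin n → ℝ) (p : ℝ) (θc θcb : Fin n → ℝ)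
    (hp : p ∈ Set.Ioo (0 : ℝ) 1)
    (hθc : ∀ i, θc i ∈ Set.Ioo (0 : ℝ) 1)
    (hθcb : ∀ i, θcb i ∈ Set.Ioo (0 : ℝ) 1)
    (F : (Fin n → Bool) → ℝ)
    (hF : ∀ x, F x = sigmoid (w₀ + ∑ i, w i * (if x i then (1 : ℝ) else 0)))
    (hconf : ∀ x : Fin n → Bool,
      (p * ∏ i, (if x i then θc i else 1 - θc i)) /
        (p * ∏ i, (if x i then θc i else 1 - θc i)
          + (1 - p) * ∏ i, (if x i then θcb i else 1 - θcb i))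
      = F x)
    (S : Finset (Fin n)) (y : Fin n → Bool) :
    (∑ x ∈ Finset.univ.filter (fun x : Fin n → Bool => ∀ i ∈ S, x i = y i),
        ((p * ∏ i, (if x i then θc i else 1 - θc i)
            + (1 - p) * ∏ i, (if x i then θcb i else 1 - θcb i)) /
          (∑ x' ∈ Finset.univ.filter (fun x' : Fin n → Bool => ∀ i ∈ S, x' i = y i),
            (p * ∏ i, (if x' i then θc i else 1 - θc i)
              + (1 - p) * ∏ i, (if x' i then θcb i else 1 - θcb i))))
          * F x)
    = sigmoid (Real.log (p / (1 - p))
        + ∑ i ∈ S, Real.log ((if y i then θc i else 1 - θc i)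
            / (if y i then θcb i else 1 - θcb i))) := by
  classical
  obtain ⟨hp0, hp1⟩ := hp
  have hp1' : 0 < 1 - p := by linarith
  -- positivity of factors
  have hgc : ∀ i (b : Bool), 0 < (if b then θc i else 1 - θc i) := by
    intro i b; cases b
    · simpa using sub_pos.mpr (hθc i).2
    · simpa using (hθc i).1
  have hgcb : ∀ i (b : Bool), 0 < (if b then θcb i else 1 - θcb i) := by
    intro i b; cases b
    · simpa using sub_pos.mpr (hθcb i).2
    · simpa using (hθcb i).1
  set A : (Fin n → Bool) → ℝ := fun x => p * ∏ i, (if x i then θc i else 1 - θc i) with hA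
  set B : (Fin n → Bool) → ℝ := fun x => (1 - p) * ∏ i, (if x i then θcb i else 1 - θcb i) with hB
  have hApos : ∀ x, 0 < A x := fun x => by
    refine mul_pos hp0 (Finset.prod_pos fun i _ => hgc i (x i))
  have hBpos : ∀ x, 0 < B x := fun x => by
    refine mul_pos hp1' (Finset.prod_pos fun i _ => hgcb i (x i))
  set Pc : ℝ := ∏ i ∈ S, (if y i then θc i else 1 - θc i) with hPc
  set Pcb : ℝ := ∏ i ∈ S, (if y i then θcb i else 1 - θcb i) with hPcb
  have hPcpos : 0 < Pc := Finset.prod_pos fun i _ => hgc i (y i)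
  have hPcbpos : 0 < Pcb := Finset.prod_pos fun i _ => hgcb i (y i)
  -- marginal sums
  have hsumc : ∑ x ∈ Finset.univ.filter (fun x : Fin n → Bool => ∀ i ∈ S, x i = y i),
      ∏ i, (if x i then θc i else 1 - θc i) = Pc := by
    have := sum_filter_prod_eq S y (fun i b => if b then θc i else 1 - θc i)
    simpa using this
  have hsumcb : ∑ x ∈ Finset.univ.filter (fun x : Fin n → Bool => ∀ i ∈ S, x i = y i),
      ∏ i, (if x i then θcb i else 1 - θcb i) = Pcb := by
    have := sum_filter_prod_eq S y (fun i b => if b then θcb i else 1 - θcb i)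
    simpa using this
  set Z : ℝ := ∑ x' ∈ Finset.univ.filter (fun x' : Fin n → Bool => ∀ i ∈ S, x' i = y i),
      (A x' + B x') with hZ
  have hZval : Z = p * Pc + (1 - p) * Pcb := by
    rw [hZ, Finset.sum_add_distrib]
    simp only [hA, hB, ← Finset.mul_sum]
    rw [hsumc, hsumcb]
  have hZpos : 0 < Z := by
    rw [hZval]
    have := mul_pos hp0 hPcpos
    have := mul_pos hp1' hPcbpos
    linarith
  -- rewrite LHS
  have hLHS : (∑ x ∈ Finset.univ.filter (fun x : Fin n → Bool => ∀ i ∈ S, x i = y i),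
      ((A x + B x) / Z) * F x) = (p * Pc) / Z := by
    have : ∀ x ∈ Finset.univ.filter (fun x : Fin n → Bool => ∀ i ∈ S, x i = y i),
        ((A x + B x) / Z) * F x = A x / Z := by
      intro x _
      rw [← hconf x]
      have hAB : A x + B x ≠ 0 := (add_pos (hApos x) (hBpos x)).ne'
      show ((A x + B x) / Z) * (A x / (A x + B x)) = A x / Z
      rw [div_mul_div_comm, mul_comm (A x + B x) (A x), mul_div_mul_right _ _ hAB]
    rw [Finset.sum_congr rfl this, ← Finset.sum_div]
    congr 1
    simp only [hA, ← Finset.mul_sum]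
    rw [hsumc]
  -- rewrite RHS argument
  have hlog : Real.log (p / (1 - p))
      + ∑ i ∈ S, Real.log ((if y i then θc i else 1 - θc i)
          / (if y i then θcb i else 1 - θcb i))
      = Real.log ((p * Pc) / ((1 - p) * Pcb)) := by
    have h1 : ∀ i ∈ S, Real.log ((if y i then θc i else 1 - θc i)
        / (if y i then θcb i else 1 - θcb i))
        = Real.log (if y i then θc i else 1 - θc i)
          - Real.log (if y i then θcb i else 1 - θcb i) := fun i _ =>
      Real.log_div (ne_of_gt (hgc i (y i))) (ne_of_gt (hgcb i (y i)))
    rw [Finset.sum_congr rfl h1, Finset.sum_sub_distrib,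
      Real.log_div (ne_of_gt hp0) (ne_of_gt hp1'),
      Real.log_div (by positivity) (by positivity),
      Real.log_mul (ne_of_gt hp0) (ne_of_gt hPcpos),
      Real.log_mul (ne_of_gt hp1') (ne_of_gt hPcbpos),
      hPc, hPcb,
      Real.log_prod (fun i _ => ne_of_gt (hgc i (y i))),
      Real.log_prod (fun i _ => ne_of_gt (hgcb i (y i)))]
    ring
  calc (∑ x ∈ Finset.univ.filter (fun x : Fin n → Bool => ∀ i ∈ S, x i = y i),
      ((A x + B x) / Z) * F x) = (p * Pc) / Z := hLHS
    _ = (p * Pc) / (p * Pc + (1 - p) * Pcb) := by rw [hZval]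
    _ = sigmoid (Real.log ((p * Pc) / ((1 - p) * Pcb))) :=
        (sigmoid_log_div (by positivity) (by positivity)).symm
    _ = _ := by rw [hlog]
end

section
/- Fix a logistic regression F over n binary features with weight vector w. The set of naive Bayes distributions (with parameters in (0,1)) conforming with F is in bijection with (0,1)ⁿ, via the map sending P to the vector (P(x₁=1|c), …, P(xₙ=1|c)). -/
open Finset

lemma sigmoid_iff {a b t : ℝ} (ha : 0 < a) (hb : 0 < b) :
    a / (a + b) = sigmoid t ↔ b = a * Real.exp (-t) := by
  unfold sigmoid
  rw [div_eq_div_iff (by linarith) (by positivity)]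
  constructor <;> intro h <;> nlinarith [Real.exp_pos (-t)]

lemma prod_single {n : ℕ} (i : Fin n) (A B : Fin n → ℝ) :
    ∏ j, (if j = i then A j else B j) = A i * ∏ j ∈ univ.erase i, B j := by
  rw [← Finset.mul_prod_erase univ _ (mem_univ i), if_pos rfl]
  congr 1
  exact Finset.prod_congr rfl fun j hj => if_neg (Finset.ne_of_mem_erase hj)

lemma key {n : ℕ} {w₀ : ℝ} {w : Fin n → ℝ} {p : ℝ} {θ β : Fin n → ℝ}
    (hp : p ∈ Set.Ioo (0:ℝ) 1) (hθ : ∀ i, θ i ∈ Set.Ioo (0:ℝ) 1)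
    (hβ : ∀ i, β i ∈ Set.Ioo (0:ℝ) 1)
    (hconf : ∀ x : Fin n → Bool,
      (p * ∏ i, (if x i then θ i else 1 - θ i)) /
        (p * ∏ i, (if x i then θ i else 1 - θ i)
          + (1 - p) * ∏ i, (if x i then β i else 1 - β i))
        = sigmoid (w₀ + ∑ i, w i * (if x i then (1:ℝ) else 0))) :
    (∀ i, β i * (1 - θ i) = θ i * (1 - β i) * Real.exp (-(w i))) ∧
      (1 - p) * ∏ i, (1 - β i) = (p * ∏ i, (1 - θ i)) * Real.exp (-w₀) := by
  have hprod : ∀ (g : Fin n → ℝ), (∀ i, g i ∈ Set.Ioo (0:ℝ) 1) →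
      ∀ x : Fin n → Bool, 0 < ∏ i, (if x i then g i else 1 - g i) := by
    intro g hg x
    refine Finset.prod_pos fun i _ => ?_
    split_ifs
    · exact (hg i).1
    · linarith [(hg i).2]
  have E : ∀ x : Fin n → Bool,
      (1 - p) * ∏ i, (if x i then β i else 1 - β i)
        = (p * ∏ i, (if x i then θ i else 1 - θ i)) *
            Real.exp (-(w₀ + ∑ i, w i * (if x i then (1:ℝ) else 0))) := by
    intro x
    exact (sigmoid_iff (mul_pos hp.1 (hprod θ hθ x))
      (mul_pos (by linarith [hp.2]) (hprod β hβ x))).mp (hconf x)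
  have E0 := E (fun _ => false)
  simp only [Bool.false_eq_true, if_false, mul_zero, Finset.sum_const_zero, add_zero] at E0
  constructor
  · intro i
    have Ei := E (fun j => decide (j = i))
    simp only [decide_eq_true_eq] at Ei
    rw [prod_single i θ (fun j => 1 - θ j), prod_single i β (fun j => 1 - β j)] at Ei
    have hsum : ∑ j, w j * (if j = i then (1:ℝ) else 0) = w i := by
      rw [Finset.sum_eq_single i]
      · simp
      · intro b _ hb; simp [hb]
      · simp
    rw [hsum] at Ei
    have hE0' : (1 - p) * ((1 - β i) * ∏ j ∈ univ.erase i, (1 - β j))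
        = (p * ((1 - θ i) * ∏ j ∈ univ.erase i, (1 - θ j))) * Real.exp (-w₀) := by
      rw [Finset.mul_prod_erase univ (fun j => (1:ℝ) - β j) (mem_univ i),
        Finset.mul_prod_erase univ (fun j => (1:ℝ) - θ j) (mem_univ i)]
      exact E0
    set Qb := ∏ j ∈ univ.erase i, (1 - β j) with hQb
    set Qc := ∏ j ∈ univ.erase i, (1 - θ j) with hQc
    have hQbp : 0 < Qb := Finset.prod_pos fun j _ => by linarith [(hβ j).2]
    have hQcp : 0 < Qc := Finset.prod_pos fun j _ => by linarith [(hθ j).2]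
    have hexp : Real.exp (-(w₀ + w i)) = Real.exp (-w₀) * Real.exp (-(w i)) := by
      rw [← Real.exp_add]; ring_nf
    rw [hexp] at Ei
    have hkey : (β i * (1 - θ i)) * (p * Qc * Real.exp (-w₀))
        = (θ i * (1 - β i) * Real.exp (-(w i))) * (p * Qc * Real.exp (-w₀)) := by
      linear_combination (1 - β i) * Ei - β i * hE0'
    exact mul_right_cancel₀
      (ne_of_gt (mul_pos (mul_pos hp.1 hQcp) (Real.exp_pos _))) hkey
  · exact E0

/-- For a fixed logistic regression with weights `(w₀, w)`, the
set of naive Bayes distributions (all parameters in `(0,1)`) conforming with it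
is in bijection with `(0,1)ⁿ` via `P ↦ (P(x₁=1|c),…,P(xₙ=1|c))`.  A naive Bayes
distribution is encoded as a triple `(prior, θc, θcb)`. -/
theorem conforming_naiveBayes_bijection
    (n : ℕ) (w₀ : ℝ) (w : Fin n → ℝ) :
    Function.Bijective
      (fun qq : {q : ℝ × (Fin n → ℝ) × (Fin n → ℝ) //
          (q.1 ∈ Set.Ioo (0 : ℝ) 1 ∧ (∀ i, q.2.1 i ∈ Set.Ioo (0 : ℝ) 1)
            ∧ (∀ i, q.2.2 i ∈ Set.Ioo (0 : ℝ) 1)) ∧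
          ∀ x : Fin n → Bool,
            (q.1 * ∏ i, (if x i then q.2.1 i else 1 - q.2.1 i)) /
              (q.1 * ∏ i, (if x i then q.2.1 i else 1 - q.2.1 i)
                + (1 - q.1) * ∏ i, (if x i then q.2.2 i else 1 - q.2.2 i))
            = sigmoid (w₀ + ∑ i, w i * (if x i then (1 : ℝ) else 0))} =>
        (⟨qq.1.2.1, qq.2.1.2.1⟩ : {θ : Fin n → ℝ // ∀ i, θ i ∈ Set.Ioo (0 : ℝ) 1})) := by
  constructor
  · rintro ⟨⟨p, θ, β⟩, ⟨⟨hp, hθ, hβ⟩, hconf⟩⟩ ⟨⟨p', θ', β'⟩, ⟨⟨hp', hθ', hβ'⟩, hconf'⟩⟩ heq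
    simp only [Subtype.mk.injEq] at heq
    obtain ⟨K1, K2⟩ := key hp hθ hβ hconf
    obtain ⟨K1', K2'⟩ := key hp' hθ' hβ' hconf'
    subst heq
    have hβeq : β = β' := by
      funext i
      have h1 := K1 i
      have h2 := K1' i
      have hz : (β i - β' i) * ((1 - θ i) + θ i * Real.exp (-(w i))) = 0 := by
        linear_combination h1 - h2
      rcases mul_eq_zero.mp hz with h | h
      · linarith
      · exfalso
        have : 0 < (1 - θ i) + θ i * Real.exp (-(w i)) :=
          add_pos (by linarith [(hθ i).2]) (mul_pos (hθ i).1 (Real.exp_pos _))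
        linarith
    subst hβeq
    have hpeq : p = p' := by
      have hB : 0 < ∏ i, (1 - β i) := Finset.prod_pos fun i _ => by linarith [(hβ i).2]
      have hC : 0 < (∏ i, (1 - θ i)) * Real.exp (-w₀) :=
        mul_pos (Finset.prod_pos fun i _ => by linarith [(hθ i).2]) (Real.exp_pos _)
      have hz : (p - p') * ((∏ i, (1 - β i)) + (∏ i, (1 - θ i)) * Real.exp (-w₀)) = 0 := by
        linear_combination K2' - K2
      rcases mul_eq_zero.mp hz with h | h
      · linarith
      · exfalso; nlinarith
    subst hpeq
    rfl
  · rintro ⟨θ, hθ⟩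
    set c : Fin n → ℝ := fun i => Real.exp (-(w i)) * θ i / (1 - θ i) with hc
    have hcpos : ∀ i, 0 < c i := fun i =>
      div_pos (mul_pos (Real.exp_pos _) (hθ i).1) (by linarith [(hθ i).2])
    set β : Fin n → ℝ := fun i => c i / (1 + c i) with hβdef
    have hβ : ∀ i, β i ∈ Set.Ioo (0:ℝ) 1 := by
      intro i
      constructor
      · exact div_pos (hcpos i) (by linarith [hcpos i])
      · rw [div_lt_one (by linarith [hcpos i])]; linarith [hcpos i]
    have h1β : ∀ i, 1 - β i = 1 / (1 + c i) := by
      intro i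
      have h2 : (1:ℝ) + c i ≠ 0 := ne_of_gt (by linarith [hcpos i])
      show 1 - c i / (1 + c i) = 1 / (1 + c i)
      field_simp
      ring
    set K : ℝ := Real.exp (-w₀) * ∏ i, ((1 - θ i) / (1 - β i)) with hK
    have hKpos : 0 < K :=
      mul_pos (Real.exp_pos _) (Finset.prod_pos fun i _ =>
        div_pos (by linarith [(hθ i).2]) (by linarith [(hβ i).2]))
    set p : ℝ := 1 / (1 + K) with hpdef
    have hp : p ∈ Set.Ioo (0:ℝ) 1 := by
      constructor
      · exact div_pos one_pos (by linarith)
      · rw [div_lt_one (by linarith)]; linarith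
    have hpK : 1 - p = p * K := by
      rw [hpdef]; field_simp; ring
    have hconf : ∀ x : Fin n → Bool,
        (p * ∏ i, (if x i then θ i else 1 - θ i)) /
          (p * ∏ i, (if x i then θ i else 1 - θ i)
            + (1 - p) * ∏ i, (if x i then β i else 1 - β i))
          = sigmoid (w₀ + ∑ i, w i * (if x i then (1:ℝ) else 0)) := by
      intro x
      have hprodθ : 0 < ∏ i, (if x i then θ i else 1 - θ i) :=
        Finset.prod_pos fun i _ => by
          split_ifs
          · exact (hθ i).1
          · linarith [(hθ i).2]
      have hprodβ : 0 < ∏ i, (if x i then β i else 1 - β i) :=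
        Finset.prod_pos fun i _ => by
          split_ifs
          · exact (hβ i).1
          · linarith [(hβ i).2]
      rw [sigmoid_iff (mul_pos hp.1 hprodθ) (mul_pos (by linarith [hp.2]) hprodβ)]
      have hexp : Real.exp (-(w₀ + ∑ i, w i * (if x i then (1:ℝ) else 0)))
          = Real.exp (-w₀) * ∏ i, Real.exp (-(w i * (if x i then (1:ℝ) else 0))) := by
        rw [neg_add, Real.exp_add]
        congr 1
        rw [← Real.exp_sum]
        congr 1
        rw [← Finset.sum_neg_distrib]
      calc (1 - p) * ∏ i, (if x i then β i else 1 - β i)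
          = p * Real.exp (-w₀) *
              ∏ i, ((1 - θ i) / (1 - β i) * (if x i then β i else 1 - β i)) := by
            rw [hpK, hK, Finset.prod_mul_distrib]; ring
        _ = p * Real.exp (-w₀) *
              ∏ i, ((if x i then θ i else 1 - θ i) *
                Real.exp (-(w i * (if x i then (1:ℝ) else 0)))) := by
            congr 1
            refine Finset.prod_congr rfl fun i _ => ?_
            by_cases hx : x i
            · have h1 : (1:ℝ) - θ i ≠ 0 := ne_of_gt (by linarith [(hθ i).2])
              have h2 : (1:ℝ) + c i ≠ 0 := ne_of_gt (by linarith [hcpos i])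
              have hci : c i = Real.exp (-(w i)) * θ i / (1 - θ i) := rfl
              simp only [hx, if_true, mul_one]
              rw [h1β i]
              have step1 : (1 - θ i) / (1 / (1 + c i)) * (c i / (1 + c i))
                  = (1 - θ i) * c i := by field_simp
              show (1 - θ i) / (1 / (1 + c i)) * (c i / (1 + c i)) = θ i * Real.exp (-(w i))
              rw [step1, hci]
              field_simp
            · simp only [hx, if_false, Bool.false_eq_true, mul_zero, neg_zero,
                Real.exp_zero, mul_one]
              rw [h1β i]
              have : (1:ℝ) + c i ≠ 0 := by linarith [hcpos i]
              field_simp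
        _ = (p * ∏ i, (if x i then θ i else 1 - θ i)) *
              Real.exp (-(w₀ + ∑ i, w i * (if x i then (1:ℝ) else 0))) := by
            rw [hexp, Finset.prod_mul_distrib]; ring
    exact ⟨⟨⟨p, θ, β⟩, ⟨⟨hp, hθ, hβ⟩, hconf⟩⟩, rfl⟩
end
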